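/- For all rates R1 > 0 and R2 > 0, the minimum power P ≥ 0 for which there exists a power-allocation parameter η ∈ [0,1] satisfying R1 ≤ (κ/2)·log₂(1 + η·P/((1−η)·P + N1)) and R2 ≤ (κ/2)·log₂(1 + (1−η)·P/N2) is exactly P(R1,R2) = N1·(2^{2R1/κ} − 1) + N2·(2^{2R2/κ} − 1)·2^{2R1/κ}; i.e., this value of P is feasible (for some η ∈ [0,1]) and no smaller P ≥ 0 is feasible. -/

import Mathlib

lemma rate_to_rpow (κ R x : ℝ) (hκ : 0 < κ) (hx : 0 < x)
    (h : R ≤ κ / 2 * Real.logb 2 x) : (2 : ℝ) ^ (2 * R / κ) ≤ x := by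
  have h2 : 2 * R / κ ≤ Real.logb 2 x := by
    rw [div_le_iff₀ hκ] at *
    nlinarith
  calc (2 : ℝ) ^ (2 * R / κ) ≤ (2 : ℝ) ^ Real.logb 2 x :=
        Real.rpow_le_rpow_of_exponent_le (by norm_num) h2
    _ = x := Real.rpow_logb (by norm_num) (by norm_num) hx

lemma rpow_to_rate (κ R x : ℝ) (hκ : 0 < κ) (hx : 0 < x)
    (h : (2 : ℝ) ^ (2 * R / κ) ≤ x) : R ≤ κ / 2 * Real.logb 2 x := by
  have h2 : 2 * R / κ ≤ Real.logb 2 x := by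
    calc 2 * R / κ = Real.logb 2 ((2:ℝ) ^ (2 * R / κ)) :=
          (Real.logb_rpow (by norm_num) (by norm_num)).symm
      _ ≤ Real.logb 2 x := (Real.logb_le_logb (by norm_num) (by positivity) hx).mpr h
  rw [div_le_iff₀ hκ] at h2
  nlinarith

/-- For rates `R1 > 0`, `R2 > 0`, bandwidth ratio `κ > 0` and noise powers
`N1 ≥ N2 > 0`, the minimum power `P ≥ 0` for which some power split `η ∈ [0,1]` satisfies
`R1 ≤ (κ/2)·log₂(1 + ηP/((1−η)P + N1))` and `R2 ≤ (κ/2)·log₂(1 + (1−η)P/N2)` is exactly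
`N1·(2^{2R1/κ} − 1) + N2·(2^{2R2/κ} − 1)·2^{2R1/κ}`. -/
theorem minimum_broadcast_power (κ N1 N2 R1 R2 : ℝ)
    (hκ : 0 < κ) (hN2 : 0 < N2) (hN : N2 ≤ N1) (hR1 : 0 < R1) (hR2 : 0 < R2) :
    IsLeast {P : ℝ | 0 ≤ P ∧ ∃ η ∈ Set.Icc (0 : ℝ) 1,
        R1 ≤ κ / 2 * Real.logb 2 (1 + η * P / ((1 - η) * P + N1)) ∧
        R2 ≤ κ / 2 * Real.logb 2 (1 + (1 - η) * P / N2)}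
      (N1 * ((2 : ℝ) ^ (2 * R1 / κ) - 1)
        + N2 * ((2 : ℝ) ^ (2 * R2 / κ) - 1) * (2 : ℝ) ^ (2 * R1 / κ)) := by
  set a : ℝ := (2 : ℝ) ^ (2 * R1 / κ) with ha_def
  set b : ℝ := (2 : ℝ) ^ (2 * R2 / κ) with hb_def
  have hN1 : 0 < N1 := lt_of_lt_of_le hN2 hN
  have ha : 1 < a := by
    have := Real.rpow_lt_rpow_of_exponent_lt (x := 2) (by norm_num)
      (show (0:ℝ) < 2 * R1 / κ by positivity)
    simpa using this
  have hb : 1 < b := by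
    have := Real.rpow_lt_rpow_of_exponent_lt (x := 2) (by norm_num)
      (show (0:ℝ) < 2 * R2 / κ by positivity)
    simpa using this
  set Ps : ℝ := N1 * (a - 1) + N2 * (b - 1) * a with hPs_def
  have hPs_pos : 0 < Ps := by
    nlinarith [mul_pos hN1 (sub_pos.mpr ha), mul_pos (mul_pos hN2 (sub_pos.mpr hb)) (by linarith : (0:ℝ) < a)]
  constructor
  · refine ⟨le_of_lt hPs_pos, (Ps - N2 * (b - 1)) / Ps, ⟨?_, ?_⟩, ?_, ?_⟩
    · apply div_nonneg _ (le_of_lt hPs_pos); nlinarith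
    · rw [div_le_one hPs_pos]; nlinarith
    · have key : 1 + (Ps - N2 * (b - 1)) / Ps * Ps /
          ((1 - (Ps - N2 * (b - 1)) / Ps) * Ps + N1) = a := by
        have hd : (1 - (Ps - N2 * (b - 1)) / Ps) * Ps = N2 * (b - 1) := by
          field_simp
          ring
        rw [hd]
        have hd2 : (0:ℝ) < N2 * (b - 1) + N1 := by nlinarith
        have hnum : (Ps - N2 * (b - 1)) / Ps * Ps = (a - 1) * (N2 * (b - 1) + N1) := by
          field_simp; ring
        rw [hnum]
        field_simp
        ring
      rw [key]
      exact rpow_to_rate _ _ _ hκ (by linarith) le_rfl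
    · have key : 1 + (1 - (Ps - N2 * (b - 1)) / Ps) * Ps / N2 = b := by
        field_simp
        ring
      rw [key]
      exact rpow_to_rate _ _ _ hκ (by linarith) le_rfl
  · rintro P ⟨hP, η, ⟨hη0, hη1⟩, h1, h2⟩
    have hD : 0 < (1 - η) * P + N1 := by nlinarith
    have hp1 : (0:ℝ) ≤ η * P / ((1 - η) * P + N1) :=
      div_nonneg (mul_nonneg hη0 hP) hD.le
    have hp2 : (0:ℝ) ≤ (1 - η) * P / N2 :=
      div_nonneg (mul_nonneg (by linarith) hP) hN2.le
    have h1' : a ≤ 1 + η * P / ((1 - η) * P + N1) :=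
      rate_to_rpow κ R1 _ hκ (by linarith) h1
    have h2' : b ≤ 1 + (1 - η) * P / N2 :=
      rate_to_rpow κ R2 _ hκ (by linarith) h2
    have h1'' : (a - 1) * ((1 - η) * P + N1) ≤ η * P := by
      rw [← sub_le_iff_le_add', le_div_iff₀ hD] at h1'
      linarith
    have h2'' : (b - 1) * N2 ≤ (1 - η) * P := by
      rw [← sub_le_iff_le_add', le_div_iff₀ hN2] at h2'
      linarith
    nlinarith [mul_le_mul_of_nonneg_left h2'' (by linarith : (0:ℝ) ≤ a - 1)]
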